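/- Let E be an additively written abelian group, let n ≥ 1, and let x ∈ E be an element of additive order exactly n+1. Let M be a multiset over E with card M = n+1 and sum M = 0. Then M.map (e ↦ e + x) = M if and only if there exists z ∈ E with (n+1) • z + (n(n+1)/2) • x = 0 and M = (Multiset.range (n+1)).map (k ↦ z + k • x), i.e. M is the multiset {z, z+x, z+2x, …, z+n·x}. -/
import Mathlib


/-- Characterization of fixed points in Lemma 3.4 (Fix): a multiset `M` of
cardinality `n+1` with sum `0` over an abelian group is invariant under
translation by an element `x` of order `n+1` if and only if it is of the form
`{z, z+x, …, z+n·x}` for some `z` with `(n+1)z + (n(n+1)/2)x = 0`. -/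
theorem stmt_8 (E : Type*) [AddCommGroup E] (n : ℕ) (hn : 1 ≤ n) (x : E)
    (hx : addOrderOf x = n + 1) (M : Multiset E)
    (hcard : Multiset.card M = n + 1) (hsum : M.sum = 0) :
    M.map (fun e => e + x) = M ↔
      ∃ z : E, (n + 1) • z + (n * (n + 1) / 2) • x = 0 ∧
        M = (Multiset.range (n + 1)).map (fun k => z + k • x) := by
  classical
  have hinj : Function.Injective (fun e : E => e + x) := add_left_injective x
  have hx0 : (n + 1) • x = 0 := by rw [← hx]; exact addOrderOf_nsmul_eq_zero x
  -- the arithmetic-progression multiset sums correctly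
  have hsumO : ∀ z : E, (((Multiset.range (n + 1)).map (fun k => z + k • x)).sum)
      = (n + 1) • z + (n * (n + 1) / 2) • x := by
    intro z
    have : ((Multiset.range (n + 1)).map (fun k => z + k • x)).sum
        = ∑ k ∈ Finset.range (n + 1), (z + k • x) := rfl
    rw [this, Finset.sum_add_distrib, Finset.sum_const, Finset.card_range,
      ← Finset.sum_smul, Finset.sum_range_id,
      show (n + 1) * (n + 1 - 1) / 2 = n * (n + 1) / 2 from by
        rw [Nat.add_sub_cancel, Nat.mul_comm]]
  constructor
  · intro h
    -- counts are invariant under translation by `x`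
    have hcount : ∀ e : E, M.count (e + x) = M.count e := by
      intro e
      conv_lhs => rw [← h]
      exact Multiset.count_map_eq_count' _ M hinj e
    have hcountk : ∀ (k : ℕ) (e : E), M.count (e + k • x) = M.count e := by
      intro k
      induction k with
      | zero => simp
      | succ k ih =>
        intro e
        have : e + (k + 1) • x = (e + k • x) + x := by
          rw [succ_nsmul, add_assoc]
        rw [this, hcount, ih]
    -- pick an element of `M`
    have hM0 : M ≠ 0 := by
      intro h0
      rw [h0] at hcard
      simp at hcard
    obtain ⟨z, hz⟩ := Multiset.exists_mem_of_ne_zero hM0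
    set O : Multiset E := (Multiset.range (n + 1)).map (fun k => z + k • x) with hO
    have hOnodup : O.Nodup := by
      refine Multiset.Nodup.map_on ?_ (Multiset.nodup_range _)
      intro i hi j hj hij
      have : i • x = j • x := by
        have := add_left_cancel hij
        exact this
      rw [nsmul_eq_nsmul_iff_modEq, hx] at this
      rw [Multiset.mem_range] at hi hj
      have := Nat.ModEq.eq_of_lt_of_lt this hi hj
      exact this
    have hle : O ≤ M := by
      rw [Multiset.le_iff_count]
      intro a
      by_cases ha : a ∈ O
      · rw [(Multiset.count_eq_one_of_mem hOnodup ha : O.count a = 1)]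
        obtain ⟨k, _, rfl⟩ := Multiset.mem_map.mp ha
        rw [hcountk k z]
        exact Multiset.one_le_count_iff_mem.mpr hz
      · rw [Multiset.count_eq_zero_of_notMem ha]
        exact Nat.zero_le _
    have hMe : M = O := by
      refine (Multiset.eq_of_le_of_card_le hle ?_).symm
      rw [hcard]
      simp [hO]
    refine ⟨z, ?_, hMe⟩
    rw [← hsumO z, ← hO, ← hMe, hsum]
  · rintro ⟨z, hz, rfl⟩
    rw [Multiset.map_map]
    have hfun : ((fun e => e + x) ∘ fun k : ℕ => z + k • x)
        = fun k : ℕ => z + (k + 1) • x := by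
      funext k
      simp only [Function.comp_apply]
      rw [succ_nsmul, add_assoc]
    rw [hfun]
    -- LHS: split off the top term `k = n`
    have hLHS : (Multiset.range (n + 1)).map (fun k : ℕ => z + (k + 1) • x)
        = z ::ₘ (Multiset.range n).map (fun k : ℕ => z + (k + 1) • x) := by
      rw [Multiset.range_succ, Multiset.map_cons, hx0, add_zero]
    -- RHS: split off the bottom term `k = 0`
    have hRHS : (Multiset.range (n + 1)).map (fun k : ℕ => z + k • x)
        = z ::ₘ (Multiset.range n).map (fun k : ℕ => z + (k + 1) • x) := by
      have h1 : n + 1 = 1 + n := by omega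
      rw [h1, Multiset.range_add, Multiset.map_add, Multiset.map_map]
      have : (Multiset.range 1).map (fun k : ℕ => z + k • x) = {z} := by
        simp [Multiset.range_succ]
      rw [this]
      have : ((fun k : ℕ => z + k • x) ∘ fun x => 1 + x)
          = fun k : ℕ => z + (k + 1) • x := by
        funext k
        simp only [Function.comp_apply]
        rw [Nat.add_comm 1 k]
      rw [this, Multiset.singleton_add]
    rw [hLHS, hRHS]
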